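/- Let S be a Cohen–Macaulay Noetherian ring, let I be an unmixed ideal of S of height c that is generically a complete intersection, let m be a positive integer, and let t be a positive integer. If I^(m) ⊆ I^m : F_c(I)^t (equivalently, F_c(I)^t ⊆ I^m : I^(m) = ann_S(I^(m)/I^m)), then I^(m) = I^m : F_c(I)^t, where F_c(I) is the c-th Fitting ideal of I regarded as an S-module. -/

import Mathlib

open Ideal Filter

universe u

/-- The `m`-th symbolic power of an ideal `I`: the intersection, over all associated primes `p`
of `S ⧸ I`, of the contractions of `I ^ m` extended to the localization at `p`. -/
noncomputable def symbolicPower {S : Type*} [CommRing S] (I : Ideal S) (m : ℕ) : Ideal S :=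
  ⨅ p : associatedPrimes S (S ⧸ I),
    letI : p.1.IsPrime := p.2.isPrime
    ((I ^ m).map (algebraMap S (Localization.AtPrime p.1))).comap
      (algebraMap S (Localization.AtPrime p.1))

/-- The height of an ideal: the infimum of the heights of the primes containing it. -/
noncomputable def idealHeight {S : Type*} [CommRing S] (I : Ideal S) : ℕ∞ :=
  ⨅ (p : PrimeSpectrum S) (_ : I ≤ p.asIdeal), Order.height p

/-- An ideal is unmixed of height `c` if it has height `c` and every associated prime of `S ⧸ I`
has height `c`. -/
def IsUnmixedOfHeight {S : Type*} [CommRing S] (I : Ideal S) (c : ℕ) : Prop :=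
  idealHeight I = (c : ℕ∞) ∧ ∀ p ∈ associatedPrimes S (S ⧸ I), idealHeight p = (c : ℕ∞)

/-- An ideal `I` is generically a complete intersection if, for every associated prime `p` of
`S ⧸ I`, the extension of `I` to the localization at `p` is generated by a regular sequence. -/
def IsGenericallyCI {S : Type*} [CommRing S] (I : Ideal S) : Prop :=
  ∀ p : associatedPrimes S (S ⧸ I),
    letI : p.1.IsPrime := p.2.isPrime
    ∃ rs : List (Localization.AtPrime p.1),
      RingTheory.Sequence.IsRegular (Localization.AtPrime p.1) rs ∧
      Ideal.ofList rs = I.map (algebraMap S (Localization.AtPrime p.1))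

/-- The depth of a local ring: the supremum of lengths of regular sequences contained in the
maximal ideal. -/
noncomputable def localDepth (R : Type*) [CommRing R] [IsLocalRing R] : ℕ∞ :=
  ⨆ rs : {rs : List R // (∀ x ∈ rs, x ∈ IsLocalRing.maximalIdeal R) ∧
      RingTheory.Sequence.IsRegular R rs}, (rs.1.length : ℕ∞)

/-- A ring is Cohen-Macaulay if the localization at every prime ideal has depth equal to its
Krull dimension. -/
def IsCohenMacaulayRing (S : Type*) [CommRing S] : Prop :=
  ∀ (p : Ideal S) (_hp : p.IsPrime),
    (localDepth (Localization.AtPrime p) : WithBot ℕ∞) = ringKrullDim (Localization.AtPrime p)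

/-- The `j`-th Fitting ideal of a module `M`: the ideal generated by the `(n - j)`-minors of a
presentation matrix coming from any generating family of size `n`. -/
noncomputable def fittingIdeal (S : Type*) [CommRing S] (M : Type*) [AddCommGroup M]
    [Module S M] (j : ℕ) : Ideal S :=
  ⨆ (n : ℕ) (g : Fin n → M) (_ : Submodule.span S (Set.range g) = ⊤),
    Ideal.span { d : S | ∃ (r : Fin (n - j) → Fin n → S) (ι : Fin (n - j) → Fin n),
      (∀ k, ∑ i, r k i • g i = 0) ∧ d = Matrix.det (Matrix.of fun k l => r l (ι k)) }

lemma idealHeight_eq_height {S : Type*} [CommRing S] (p : Ideal S) (hp : p.IsPrime) :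
    idealHeight p = Order.height (⟨p, hp⟩ : PrimeSpectrum S) := by
  apply le_antisymm
  · exact iInf_le_of_le ⟨p, hp⟩ (iInf_le _ le_rfl)
  · exact le_iInf₂ fun q hq => Order.height_mono (show (⟨p, hp⟩ : PrimeSpectrum S) ≤ q from hq)

lemma ringKrullDim_atPrime_le {S : Type*} [CommRing S] (p : Ideal S) (hp : p.IsPrime) {c : ℕ}
    (h : idealHeight p = (c : ℕ∞)) :
    ringKrullDim (Localization.AtPrime p) ≤ ((c : ℕ∞) : WithBot ℕ∞) := by
  haveI := hp
  rw [ringKrullDim, Order.krullDim]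
  apply iSup_le
  intro P
  set φ := algebraMap S (Localization.AtPrime p)
  have hinj : Function.Injective
      (fun q : PrimeSpectrum (Localization.AtPrime p) =>
        (⟨q.asIdeal.comap φ, q.2.comap φ⟩ : PrimeSpectrum S)) := by
    intro a b hab
    have : a.asIdeal = b.asIdeal := by
      have ha := IsLocalization.map_comap p.primeCompl (Localization.AtPrime p) a.asIdeal
      have hb := IsLocalization.map_comap p.primeCompl (Localization.AtPrime p) b.asIdeal
      rw [← ha, ← hb]
      congr 1
      exact congrArg PrimeSpectrum.asIdeal hab
    exact PrimeSpectrum.ext this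
  have hsm : StrictMono (fun q : PrimeSpectrum (Localization.AtPrime p) =>
      (⟨q.asIdeal.comap φ, q.2.comap φ⟩ : PrimeSpectrum S)) := by
    intro a b hab
    refine lt_of_le_of_ne ?_ (fun h => hab.ne (hinj h))
    exact Ideal.comap_mono hab.le
  set Q := P.map _ hsm with hQ
  have hlast : Q.last ≤ (⟨p, hp⟩ : PrimeSpectrum S) := by
    show (P.last).asIdeal.comap φ ≤ p
    have h1 : (P.last).asIdeal ≤ IsLocalRing.maximalIdeal (Localization.AtPrime p) :=
      IsLocalRing.le_maximalIdeal P.last.2.ne_top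
    calc (P.last).asIdeal.comap φ ≤ (IsLocalRing.maximalIdeal (Localization.AtPrime p)).comap φ :=
          Ideal.comap_mono h1
      _ = p := Localization.AtPrime.comap_maximalIdeal
  have hlen : (P.length : ℕ∞) ≤ Order.height (⟨p, hp⟩ : PrimeSpectrum S) := by
    have := Order.length_le_height hlast
    simpa [Q] using this
  rw [← idealHeight_eq_height p hp, h] at hlen
  show (P.length : WithBot ℕ∞) ≤ ((c : ℕ∞) : WithBot ℕ∞)
  exact_mod_cast hlen

lemma fitting_not_subset_prime {S : Type u} [CommRing S] [IsNoetherianRing S]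
    (I : Ideal S) (c : ℕ) (p : Ideal S) (hp : p.IsPrime)
    (rs : List (Localization.AtPrime p))
    (hrs : Ideal.ofList rs = I.map (algebraMap S (Localization.AtPrime p)))
    (hlen : rs.length ≤ c) :
    ∃ d ∈ fittingIdeal S ↥I c, d ∉ p := by
  classical
  haveI := hp
  set φ := algebraMap S (Localization.AtPrime p) with hφ
  set s := rs.length with hs
  have hfmem : ∀ j : Fin s, rs.get j ∈ I.map φ := by
    intro j
    rw [← hrs]
    exact Ideal.subset_span (rs.get_mem j)
  have hx : ∀ j : Fin s, ∃ x : S, x ∈ I ∧ ∃ u ∈ p.primeCompl,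
      rs.get j * φ u = φ x := by
    intro j
    obtain ⟨⟨a, w⟩, hau⟩ :=
      (IsLocalization.mem_map_algebraMap_iff p.primeCompl (Localization.AtPrime p)).mp (hfmem j)
    exact ⟨a, a.2, w, w.2, hau⟩
  choose x hxI u hu hxu using hx
  have hXspan : ∀ z : S, z ∈ I →
      φ z ∈ Submodule.span (Localization.AtPrime p) (Set.range fun j => φ (x j)) := by
    intro z hz
    have h1 : φ z ∈ I.map φ := Ideal.mem_map_of_mem _ hz
    rw [← hrs] at h1
    have h2 : Ideal.ofList rs ≤
        Submodule.span (Localization.AtPrime p) (Set.range fun j => φ (x j)) := by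
      rw [Ideal.ofList, Ideal.span_le]
      intro r hr
      obtain ⟨j, hj⟩ := List.get_of_mem hr
      have hunit : IsUnit (φ (u j)) := IsLocalization.map_units _ ⟨u j, hu j⟩
      obtain ⟨v, hv⟩ := hunit
      have heq : r = ↑v⁻¹ * φ (x j) := by
        rw [← hj, ← hxu j, ← hv, mul_comm (rs.get j) (v : Localization.AtPrime p),
          ← mul_assoc, v.inv_mul, one_mul]
      rw [heq]
      exact Submodule.smul_mem _ _ (Submodule.subset_span ⟨j, rfl⟩)
    exact h2 h1
  obtain ⟨k, g, hg⟩ := Module.Finite.exists_fin (R := S) (M := ↥I)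
  have hrel : ∀ i : Fin k, ∃ v ∈ p.primeCompl, ∃ e : Fin s → S,
      v * (g i : S) = ∑ j, e j * x j := by
    intro i
    have h1 := hXspan (g i) (g i).2
    obtain ⟨cf, hcf⟩ := (Submodule.mem_span_range_iff_exists_fun (R := Localization.AtPrime p)).mp h1
    obtain ⟨b, hb⟩ := IsLocalization.exist_integer_multiples_of_finite p.primeCompl cf
    choose dd hdd using fun j => hb j
    simp only [Algebra.smul_def] at hdd
    have key : φ (↑b * (g i : S)) = φ (∑ j, dd j * x j) := by
      rw [_root_.map_mul, ← hcf, Finset.mul_sum, map_sum]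
      exact Finset.sum_congr rfl fun j _ => by
        rw [smul_eq_mul, _root_.map_mul, hdd j, mul_assoc]
    obtain ⟨w, hw⟩ := (IsLocalization.eq_iff_exists p.primeCompl _).mp key
    refine ⟨↑w * ↑b, mul_mem w.2 b.2, fun j => ↑w * dd j, ?_⟩
    rw [mul_assoc, hw, Finset.mul_sum]
    exact Finset.sum_congr rfl fun j _ => (mul_assoc _ _ _).symm
  choose v hv e he using hrel
  -- assemble the generating family and the relations
  let g' : Fin (s + k) → ↥I := Fin.addCases (fun j => ⟨x j, hxI j⟩) g
  have hg' : Submodule.span S (Set.range g') = ⊤ := by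
    rw [eq_top_iff, ← hg]
    apply Submodule.span_mono
    rintro _ ⟨i, rfl⟩
    exact ⟨Fin.natAdd s i, by simp [g']⟩
  have hsk : ∀ l : Fin (s + k - c), c - s + (l : ℕ) < k := by
    intro l
    have h1 := l.isLt
    omega
  let il : Fin (s + k - c) → Fin k := fun l => ⟨c - s + l, hsk l⟩
  let r : Fin (s + k - c) → Fin (s + k) → S := fun l =>
    Fin.addCases (fun j => - e (il l) j) (fun i => if i = il l then v (il l) else 0)
  have hrel' : ∀ l, ∑ i, r l i • g' i = 0 := by
    intro l
    rw [Fin.sum_univ_add]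
    have h1 : ∀ j : Fin s, r l (Fin.castAdd k j) • g' (Fin.castAdd k j)
        = (- e (il l) j) • (⟨x j, hxI j⟩ : ↥I) := by
      intro j; simp [r, g']
    have h2 : ∀ i : Fin k, r l (Fin.natAdd s i) • g' (Fin.natAdd s i)
        = (if i = il l then v (il l) else 0) • g i := by
      intro i; simp only [r, g', Fin.addCases_right]
    rw [Finset.sum_congr rfl fun j _ => h1 j, Finset.sum_congr rfl fun i _ => h2 i]
    have h3 : ∑ i : Fin k, (if i = il l then v (il l) else 0) • g i = v (il l) • g (il l) := by
      rw [Finset.sum_eq_single_of_mem (il l) (Finset.mem_univ _) (fun b _ hb => by simp [hb])]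
      simp
    rw [h3]
    apply Subtype.ext
    push_cast
    simp only [neg_smul, smul_eq_mul]
    rw [he (il l), ← Finset.sum_add_distrib]
    simp
  -- the minor
  let ι : Fin (s + k - c) → Fin (s + k) := fun l => Fin.natAdd s (il l)
  have hil_inj : Function.Injective il := by
    intro a b hab
    have h0 : (il a : ℕ) = (il b : ℕ) := congrArg Fin.val hab
    simp only [il] at h0
    exact Fin.ext (by omega)
  have hmat : (Matrix.of fun a b => r b (ι a))
      = Matrix.diagonal (fun a => v (il a)) := by
    ext a b
    have hab : r b (ι a) = if il a = il b then v (il b) else 0 := by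
      simp [r, ι]
    rw [Matrix.of_apply, hab]
    by_cases h : a = b
    · subst h
      simp [Matrix.diagonal_apply_eq]
    · have h2 : il a ≠ il b := fun hh => h (hil_inj hh)
      rw [Matrix.diagonal_apply_ne _ h, if_neg h2]
  refine ⟨Matrix.det (Matrix.of fun a b => r b (ι a)), ?_, ?_⟩
  · have hmem : Matrix.det (Matrix.of fun a b => r b (ι a)) ∈
        Ideal.span { d : S | ∃ (r : Fin (s + k - c) → Fin (s + k) → S)
          (ι : Fin (s + k - c) → Fin (s + k)),
          (∀ k, ∑ i, r k i • g' i = 0) ∧ d = Matrix.det (Matrix.of fun k l => r l (ι k)) } :=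
      Ideal.subset_span ⟨r, ι, hrel', rfl⟩
    have hle' : Ideal.span { d : S | ∃ (r : Fin (s + k - c) → Fin (s + k) → S)
          (ι : Fin (s + k - c) → Fin (s + k)),
          (∀ k, ∑ i, r k i • g' i = 0) ∧ d = Matrix.det (Matrix.of fun k l => r l (ι k)) } ≤
        fittingIdeal S ↥I c :=
      le_iSup_of_le (s + k) (le_iSup_of_le g' (le_iSup_of_le hg' le_rfl))
    exact hle' hmem
  · rw [hmat, Matrix.det_diagonal]
    exact Submonoid.prod_mem p.primeCompl fun a _ => hv (il a)

theorem stmt14 {S : Type u} [CommRing S] [IsNoetherianRing S] (hCM : IsCohenMacaulayRing S)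
    (I : Ideal S) (c : ℕ) (hunm : IsUnmixedOfHeight I c) (hgci : IsGenericallyCI I)
    (m t : ℕ) (hm : 0 < m) (ht : 0 < t)
    (hle : symbolicPower I m ≤ Submodule.colon (I ^ m) ((fittingIdeal S ↥I c ^ t : Ideal S) : Set S)) :
    symbolicPower I m = Submodule.colon (I ^ m) ((fittingIdeal S ↥I c ^ t : Ideal S) : Set S) := by
  refine le_antisymm hle ?_
  intro z hz
  rw [symbolicPower, Submodule.mem_iInf]
  rintro ⟨p, hpmem⟩
  haveI hp : p.IsPrime := hpmem.isPrime
  show z ∈ ((I ^ m).map (algebraMap S (Localization.AtPrime p))).comap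
      (algebraMap S (Localization.AtPrime p))
  obtain ⟨rs, hreg, hrs⟩ := hgci ⟨p, hpmem⟩
  have hIlep : I ≤ p := by
    obtain ⟨hp', y, hy⟩ := hpmem
    intro a ha
    rw [hy]
    refine Ideal.le_radical ?_
    rw [Submodule.mem_colon]
    intro y0 hy0
    rw [Set.mem_singleton_iff.mp hy0, Submodule.mem_bot]
    obtain ⟨y', rfl⟩ := Ideal.Quotient.mk_surjective y
    show a • (Ideal.Quotient.mk I y') = 0
    have hsm : a • (Ideal.Quotient.mk I y') = Ideal.Quotient.mk I (a * y') := rfl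
    rw [hsm]
    exact Ideal.Quotient.eq_zero_iff_mem.mpr (I.mul_mem_right _ ha)
  -- bound the length of the regular sequence by the depth and dimension
  have hmaxmem : ∀ y ∈ rs, y ∈ IsLocalRing.maximalIdeal (Localization.AtPrime p) := by
    intro y hy
    have h1 : y ∈ Ideal.ofList rs := Ideal.subset_span hy
    rw [hrs] at h1
    have h2 : I.map (algebraMap S (Localization.AtPrime p)) ≤
        p.map (algebraMap S (Localization.AtPrime p)) := Ideal.map_mono hIlep
    rw [Localization.AtPrime.map_eq_maximalIdeal] at h2
    exact h2 h1
  have hdepth : (rs.length : ℕ∞) ≤ localDepth (Localization.AtPrime p) :=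
    le_iSup (fun rr : {rr : List (Localization.AtPrime p) //
        (∀ x ∈ rr, x ∈ IsLocalRing.maximalIdeal (Localization.AtPrime p)) ∧
        RingTheory.Sequence.IsRegular (Localization.AtPrime p) rr} => (rr.1.length : ℕ∞))
      ⟨rs, hmaxmem, hreg⟩
  have hlen : rs.length ≤ c := by
    have h1 : ((rs.length : ℕ∞) : WithBot ℕ∞) ≤ ((c : ℕ∞) : WithBot ℕ∞) := by
      calc ((rs.length : ℕ∞) : WithBot ℕ∞)
          ≤ (localDepth (Localization.AtPrime p) : WithBot ℕ∞) := WithBot.coe_le_coe.mpr hdepth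
        _ = ringKrullDim (Localization.AtPrime p) := hCM p hp
        _ ≤ _ := ringKrullDim_atPrime_le p hp (hunm.2 p hpmem)
    exact_mod_cast h1
  obtain ⟨d, hdF, hdp⟩ := fitting_not_subset_prime I c p hp rs hrs hlen
  have hzd : z * d ^ t ∈ I ^ m := by
    have h1 := Submodule.mem_colon.mp hz (d ^ t) (Ideal.pow_mem_pow hdF t)
    rwa [smul_eq_mul] at h1
  rw [Ideal.mem_comap]
  have hu : IsUnit ((algebraMap S (Localization.AtPrime p)) d) :=
    IsLocalization.map_units (M := p.primeCompl) _ ⟨d, hdp⟩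
  obtain ⟨vu, hvu⟩ := hu.pow t
  have hmem2 : (algebraMap S (Localization.AtPrime p)) z * ↑vu ∈
      (I ^ m).map (algebraMap S (Localization.AtPrime p)) := by
    rw [hvu, ← map_pow, ← _root_.map_mul]
    exact Ideal.mem_map_of_mem _ hzd
  have h5 : (↑vu⁻¹ : Localization.AtPrime p) *
      ((algebraMap S (Localization.AtPrime p)) z * ↑vu) =
      (algebraMap S (Localization.AtPrime p)) z := by
    rw [mul_comm ((algebraMap S (Localization.AtPrime p)) z) (vu : Localization.AtPrime p),
      ← mul_assoc, vu.inv_mul, one_mul]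
  have h6 := Ideal.mul_mem_left _ (↑vu⁻¹ : Localization.AtPrime p) hmem2
  rwa [h5] at h6
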